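/- For a generic symmetry π ∈ Sym(G,V), the trace of D_v(π) is independent of the choice of the generator v ∈ Gen(V); that is, the character of the representation D_v restricted to Sym(G,V) does not depend on v. -/

import Mathlib

open Polynomial Matrix

lemma aux_eigen_pow {Ω : Type*} [Field Ω] {n : Type*} [Fintype n] [DecidableEq n]
    {M : Matrix n n Ω} {m : ℕ} (hM : M ^ m = 1) {x : Ω} (hx : x ∈ M.charpoly.roots) :
    x ^ m = 1 := by
  have hroot : M.charpoly.IsRoot x := isRoot_of_mem_roots hx
  have hdet : (x • (1 : Matrix n n Ω) - M).det = 0 := by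
    have hmap : (charmatrix M).map (evalRingHom x) = x • (1 : Matrix n n Ω) - M := by
      ext i j
      by_cases h : i = j
      · subst h
        simp [charmatrix_apply_eq, Matrix.map_apply, Matrix.sub_apply, Matrix.smul_apply,
          Matrix.one_apply]
      · simp [charmatrix_apply_ne _ _ _ h, Matrix.map_apply, Matrix.sub_apply,
          Matrix.smul_apply, Matrix.one_apply, h]
    have h2 : evalRingHom x (charmatrix M).det = ((charmatrix M).map (evalRingHom x)).det :=
      RingHom.map_det (evalRingHom x) (charmatrix M)
    have h3 : evalRingHom x M.charpoly = 0 := hroot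
    rw [Matrix.charpoly] at h3
    rw [← hmap, ← h2, h3]
  obtain ⟨v, hv, hveq⟩ := (Matrix.exists_mulVec_eq_zero_iff.2 hdet)
  have hMv : M.mulVec v = x • v := by
    have := hveq
    rw [Matrix.sub_mulVec] at this
    have h1 : (x • (1 : Matrix n n Ω)).mulVec v = x • v := by
      rw [Matrix.smul_mulVec, Matrix.one_mulVec]
    rw [h1] at this
    linear_combination (norm := module) -this
  have hpow : ∀ j : ℕ, (M ^ j).mulVec v = x ^ j • v := by
    intro j
    induction j with
    | zero => simp [Matrix.one_mulVec]
    | succ i ih =>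
      rw [pow_succ', pow_succ', ← Matrix.mulVec_mulVec, ih]
      rw [Matrix.mulVec_smul, hMv, smul_smul]
      rw [mul_comm]
  have hvm : v = x ^ m • v := by
    have := hpow m
    rw [hM, Matrix.one_mulVec] at this
    exact this
  obtain ⟨i, hi⟩ := Function.ne_iff.mp hv
  have hqi : v i = x ^ m * v i := congrFun hvm i
  have hz : (x ^ m - 1) * v i = 0 := by
    have : x ^ m * v i - v i = 0 := by rw [← hqi]; ring
    calc (x ^ m - 1) * v i = x ^ m * v i - v i := by ring
    _ = 0 := this
  rcases mul_eq_zero.mp hz with h | h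
  · exact sub_eq_zero.mp h
  · exact absurd h hi

lemma aux_trace_multiset {k Ω : Type*} [Field k] [Field Ω] [IsAlgClosed Ω] [Algebra k Ω]
    {n : ℕ} (hn : n ≠ 0) (M : Matrix (Fin n) (Fin n) k) {m : ℕ} (hM : M ^ m = 1) :
    ∃ s : Multiset Ω, Multiset.card s = n ∧ (∀ x ∈ s, x ^ m = 1) ∧
      s.sum = algebraMap k Ω M.trace := by
  haveI : Nonempty (Fin n) := Fin.pos_iff_nonempty.mp (Nat.pos_of_ne_zero hn)
  set ι := algebraMap k Ω with hι
  set MΩ : Matrix (Fin n) (Fin n) Ω := M.map ι with hMΩdef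
  have hMΩ : MΩ ^ m = 1 := by
    have h1 : MΩ = ι.mapMatrix M := rfl
    rw [h1, ← map_pow, hM, _root_.map_one]
  have hsp : MΩ.charpoly.Splits := IsAlgClosed.splits _
  have hdeg : MΩ.charpoly.natDegree = n := by
    rw [Matrix.charpoly_natDegree_eq_dim, Fintype.card_fin]
  refine ⟨MΩ.charpoly.roots, ?_, ?_, ?_⟩
  · rw [Polynomial.splits_iff_card_roots.mp hsp, hdeg]
  · intro x hx
    exact aux_eigen_pow hMΩ hx
  · have hsum := hsp.nextCoeff_eq_neg_sum_roots_of_monic MΩ.charpoly_monic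
    have hnext : MΩ.charpoly.nextCoeff = MΩ.charpoly.coeff (n - 1) := by
      rw [Polynomial.nextCoeff_of_natDegree_pos (by omega), hdeg]
    have htr := Matrix.trace_eq_neg_charpoly_coeff MΩ
    rw [Fintype.card_fin] at htr
    have htrmap : MΩ.trace = ι M.trace := by
      simp [Matrix.trace, hMΩdef, Matrix.map_apply, map_sum, Matrix.diag]
    rw [hnext] at hsum
    rw [htrmap] at htr
    rw [hsum, neg_neg] at htr
    exact htr.symm

lemma aux_select {k V G : Type*} [Field k] [AddCommGroup V] [Module k V] [FiniteDimensional k V]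
    (f : G → V) (h : Submodule.span k (Set.range f) = ⊤) :
    ∃ (c : Fin (Module.finrank k V) → G) (b : Module.Basis (Fin (Module.finrank k V)) k V),
      ∀ i, (b i : V) = f (c i) := by
  classical
  obtain ⟨s, hsub, hspan, hli⟩ := exists_linearIndependent k (Set.range f)
  have hfin : s.Finite := hli.finite
  haveI : Fintype s := hfin.fintype
  have hspan' : ⊤ ≤ Submodule.span k (Set.range ((↑) : s → V)) := by
    rw [Subtype.range_coe, hspan, h]
  let B0 : Module.Basis s k V := Module.Basis.mk hli hspan'
  have hcard : Fintype.card s = Module.finrank k V :=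
    (Module.finrank_eq_card_basis B0).symm
  let e : s ≃ Fin (Module.finrank k V) := Fintype.equivFinOfCardEq hcard
  let B : Module.Basis (Fin (Module.finrank k V)) k V := B0.reindex e
  have hc : ∀ i, ∃ g, f g = B i := by
    intro i
    have : (B i : V) ∈ s := by
      have : B i = B0 (e.symm i) := by simp [B]
      rw [this, Module.Basis.mk_apply]
      exact (e.symm i).2
    exact hsub this
  choose c hcc using hc
  exact ⟨c, B, fun i => (hcc i).symm⟩

lemma aux_rat {k G V : Type*} [Field k] [Group G]
    [AddCommGroup V] [Module k V] [FiniteDimensional k V]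
    [DistribMulAction G V] [SMulCommClass G k V]
    (hd : Module.finrank k V ≠ 0)
    (π : Equiv.Perm G) (v w : V) (t₀ : k)
    (h : Submodule.span k (MulAction.orbit G (v + t₀ • (w - v))) = ⊤) :
    ∃ p q : Polynomial k, q.eval t₀ ≠ 0 ∧ ∀ t : k, q.eval t ≠ 0 →
      (Submodule.span k (MulAction.orbit G (v + t • (w - v))) = ⊤ ∧
       ∀ At : V ≃ₗ[k] V, (∀ g : G, At (g • (v + t • (w - v))) = π g • (v + t • (w - v))) →
         (LinearMap.trace k V At.toLinearMap) * q.eval t = p.eval t) := by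
  classical
  set d := Module.finrank k V with hdd
  haveI : Nonempty (Fin d) := Fin.pos_iff_nonempty.mp (Nat.pos_of_ne_zero hd)
  set u : k → V := fun t => v + t • (w - v) with hu
  have horb : ∀ t : k, MulAction.orbit G (u t) = Set.range (fun g : G => g • u t) :=
    fun _ => rfl
  obtain ⟨c, B, hB⟩ := aux_select (fun g : G => g • (u t₀)) (by rw [← horb t₀]; exact h)
  have hsmul : ∀ (g : G) (t : k), g • u t = g • v + t • (g • (w - v)) := by
    intro g t
    rw [hu]
    simp only [smul_add]
    rw [smul_comm]
  -- coordinate matrices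
  set N : k → Matrix (Fin d) (Fin d) k := fun t => Matrix.of fun i j => B.repr ((c j) • u t) i
    with hN
  set M' : k → Matrix (Fin d) (Fin d) k :=
    fun t => Matrix.of fun i j => B.repr ((π (c j)) • u t) i with hM'
  set Np : Matrix (Fin d) (Fin d) (Polynomial k) := Matrix.of fun i j =>
    Polynomial.C (B.repr ((c j) • v) i) + Polynomial.X * Polynomial.C (B.repr ((c j) • (w - v)) i)
    with hNp
  set M'p : Matrix (Fin d) (Fin d) (Polynomial k) := Matrix.of fun i j =>
    Polynomial.C (B.repr ((π (c j)) • v) i)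
      + Polynomial.X * Polynomial.C (B.repr ((π (c j)) • (w - v)) i) with hM'p
  have hNeval : ∀ t : k, (Polynomial.aeval t : Polynomial k →ₐ[k] k).mapMatrix Np = N t := by
    intro t
    ext i j
    simp only [AlgHom.mapMatrix_apply, Matrix.map_apply, hNp, Matrix.of_apply, map_add,
      _root_.map_mul, Polynomial.aeval_C, Polynomial.aeval_X, Algebra.algebraMap_self_apply, hN]
    rw [hsmul (c j) t]
    simp [Finsupp.smul_apply, smul_eq_mul, mul_comm]
  have hM'eval : ∀ t : k, (Polynomial.aeval t : Polynomial k →ₐ[k] k).mapMatrix M'p = M' t := by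
    intro t
    ext i j
    simp only [AlgHom.mapMatrix_apply, Matrix.map_apply, hM'p, Matrix.of_apply, map_add,
      _root_.map_mul, Polynomial.aeval_C, Polynomial.aeval_X, Algebra.algebraMap_self_apply, hM']
    rw [hsmul (π (c j)) t]
    simp [Finsupp.smul_apply, smul_eq_mul, mul_comm]
  refine ⟨(Np.adjugate * M'p).trace, Np.det, ?_, ?_⟩
  · -- q.eval t₀ = det (N t₀) = det 1 = 1
    have h1 : Polynomial.eval t₀ Np.det = (N t₀).det := by
      rw [← Polynomial.coe_aeval_eq_eval, ← hNeval t₀, ← AlgHom.map_det]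
    have h2 : N t₀ = 1 := by
      ext i j
      simp only [hN, Matrix.of_apply]
      rw [← hB j, B.repr_self]
      simp [Finsupp.single_apply, Matrix.one_apply, eq_comm]
    rw [h1, h2, Matrix.det_one]
    exact one_ne_zero
  · intro t ht
    have hqt : Polynomial.eval t Np.det = (N t).det := by
      rw [← Polynomial.coe_aeval_eq_eval, ← hNeval t, ← AlgHom.map_det]
    have hdet : (N t).det ≠ 0 := by rw [← hqt]; exact ht
    -- the family e is a basis
    set e : Fin d → V := fun i => (c i) • u t with he
    have hrepr : ∀ i j, N t i j = B.repr (e j) i := fun i j => rfl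
    have hli : LinearIndependent k e := by
      rw [Fintype.linearIndependent_iff]
      intro z hz
      have hmv : N t *ᵥ z = 0 := by
        funext l
        have : B.repr (∑ i, z i • e i) l = 0 := by rw [hz]; simp
        simpa [Matrix.mulVec, dotProduct, hrepr, mul_comm, Finsupp.smul_apply,
          smul_eq_mul] using this
      haveI := Matrix.invertibleOfIsUnitDet (N t) (isUnit_iff_ne_zero.mpr hdet)
      intro i
      have : z = 0 := by
        calc z = (1 : Matrix (Fin d) (Fin d) k) *ᵥ z := by rw [Matrix.one_mulVec]
        _ = (⅟(N t) * N t) *ᵥ z := by rw [invOf_mul_self]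
        _ = ⅟(N t) *ᵥ (N t *ᵥ z) := by rw [Matrix.mulVec_mulVec]
        _ = 0 := by rw [hmv, Matrix.mulVec_zero]
      rw [this]; rfl
    let Bt : Module.Basis (Fin d) k V := basisOfLinearIndependentOfCardEqFinrank hli (Fintype.card_fin d)
    have hBt : ∀ i, Bt i = e i := fun i => by
      simp [Bt, coe_basisOfLinearIndependentOfCardEqFinrank]
    have hspan : Submodule.span k (MulAction.orbit G (u t)) = ⊤ := by
      apply top_unique
      have h1 : Submodule.span k (Set.range e) = ⊤ := by
        have := Bt.span_eq
        rwa [(funext hBt : ⇑Bt = e)] at this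
      rw [← h1]
      apply Submodule.span_mono
      rintro x ⟨i, rfl⟩
      rw [horb t]
      exact ⟨c i, rfl⟩
    refine ⟨hspan, ?_⟩
    intro At hAt
    set X := LinearMap.toMatrix Bt Bt At.toLinearMap with hX
    have hNX : N t * X = M' t := by
      ext i j
      have hAe : At.toLinearMap (e j) = (π (c j)) • u t := hAt (c j)
      have hXc : ∀ l, X l j = Bt.repr (At.toLinearMap (Bt j)) l := fun l => by
        rw [hX, LinearMap.toMatrix_apply]
      have hsum : ∑ l, X l j • e l = At.toLinearMap (e j) := by
        calc ∑ l, X l j • e l = ∑ l, Bt.repr (At.toLinearMap (e j)) l • Bt l := by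
              apply Finset.sum_congr rfl
              intro l _
              rw [hXc l, hBt l, hBt j]
        _ = At.toLinearMap (e j) := Bt.sum_repr _
      calc (N t * X) i j = ∑ l, B.repr (e l) i * X l j := by
            simp [Matrix.mul_apply, hrepr]
      _ = B.repr (∑ l, X l j • e l) i := by
            rw [map_sum]
            simp [Finsupp.smul_apply, smul_eq_mul, mul_comm]
      _ = B.repr ((π (c j)) • u t) i := by rw [hsum, hAe]
      _ = M' t i j := rfl
    have hmulmap : (Polynomial.aeval t : Polynomial k →ₐ[k] k).mapMatrix (Np.adjugate * M'p)
        = (N t).adjugate * M' t := by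
      rw [_root_.map_mul, AlgHom.map_adjugate, hNeval t, hM'eval t]
    have hpt : Polynomial.eval t (Np.adjugate * M'p).trace = ((N t).adjugate * M' t).trace := by
      rw [← hmulmap, ← Polynomial.coe_aeval_eq_eval]
      simp [Matrix.trace, AlgHom.mapMatrix_apply, Matrix.map_apply, map_sum, Matrix.diag]
    have hkey : (N t).adjugate * M' t = (N t).det • X := by
      rw [← hNX, ← Matrix.mul_assoc, Matrix.adjugate_mul, Matrix.smul_mul, Matrix.one_mul]
    have htrmat : LinearMap.trace k V At.toLinearMap = X.trace :=
      LinearMap.trace_eq_matrix_trace k Bt At.toLinearMap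
    rw [htrmat, hqt, hpt, hkey, Matrix.trace_smul, smul_eq_mul, mul_comm]

/-- For a generic symmetry `π ∈ Sym(G,V)`, the trace of `D_v(π)` is
independent of the choice of the generator `v ∈ Gen(V)`. -/
theorem trace_of_generic_sym_independent_of_generator
    {k G V : Type*} [Field k] [Infinite k] [Group G] [Finite G]
    [AddCommGroup V] [Module k V] [FiniteDimensional k V]
    [DistribMulAction G V] [SMulCommClass G k V]
    (π : Equiv.Perm G)
    (hπ : ∀ u : V, Submodule.span k (MulAction.orbit G u) = ⊤ →
      ∃ A : V ≃ₗ[k] V, ∀ g : G, A (g • u) = π g • u)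
    (v w : V)
    (hv : Submodule.span k (MulAction.orbit G v) = ⊤)
    (hw : Submodule.span k (MulAction.orbit G w) = ⊤)
    (A B : V ≃ₗ[k] V)
    (hA : ∀ g : G, A (g • v) = π g • v)
    (hB : ∀ g : G, B (g • w) = π g • w) :
    LinearMap.trace k V A.toLinearMap = LinearMap.trace k V B.toLinearMap := by
  classical
  by_cases hd : Module.finrank k V = 0
  · haveI : Subsingleton V := Module.finrank_zero_iff.mp hd
    have hAB : A.toLinearMap = B.toLinearMap := Subsingleton.elim _ _
    rw [hAB]
  · haveI : Fintype G := Fintype.ofFinite G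
    set d := Module.finrank k V with hdd
    set Ω := AlgebraicClosure k with hΩ
    set ι := algebraMap k Ω with hι
    have hιinj : Function.Injective ι := ι.injective
    set m := orderOf π with hm
    have hmpos : 0 < m := orderOf_pos π
    have hπm : π ^ m = 1 := pow_orderOf_eq_one π
    set F : Finset Ω := (Polynomial.nthRoots m (1:Ω)).toFinset with hF
    set T : Finset Ω := ((d • F.val).powersetCard d).toFinset.image Multiset.sum with hT
    -- any symmetry at a generator has trace (mapped to Ω) in T
    have hmem : ∀ (u' : V), Submodule.span k (MulAction.orbit G u') = ⊤ →
        ∀ At : V ≃ₗ[k] V, (∀ g : G, At (g • u') = π g • u') →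
          ι (LinearMap.trace k V At.toLinearMap) ∈ T := by
      intro u' hspan At hAt
      set f := At.toLinearMap with hf
      have hiter : ∀ (j : ℕ) (g : G), (f ^ j) (g • u') = ((π ^ j) g) • u' := by
        intro j
        induction j with
        | zero => intro g; simp
        | succ i ih =>
          intro g
          rw [pow_succ, Module.End.mul_apply]
          have : f (g • u') = (π g) • u' := hAt g
          rw [this, ih (π g), pow_succ, Equiv.Perm.mul_apply]
      have hfm : f ^ m = (1 : Module.End k V) := by
        apply LinearMap.ext_on hspan
        rintro x ⟨g, rfl⟩
        rw [hiter m g, hπm]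
        simp
      set β := Module.finBasis k V with hβ
      set Mm := LinearMap.toMatrix β β f with hMm
      have hMmpow : Mm ^ m = 1 := by
        have hmp : ∀ j : ℕ, LinearMap.toMatrix β β (f ^ j) = Mm ^ j := by
          intro j
          induction j with
          | zero => simp [LinearMap.toMatrix_one]
          | succ i ih => rw [pow_succ, pow_succ, LinearMap.toMatrix_mul, ih]
        rw [← hmp m, hfm, LinearMap.toMatrix_one]
      obtain ⟨s, hscard, hsroot, hssum⟩ := aux_trace_multiset (Ω := Ω) hd Mm hMmpow
      have htr : ι (LinearMap.trace k V f) = s.sum := by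
        rw [LinearMap.trace_eq_matrix_trace k β f, ← hssum]
      rw [htr]
      apply Finset.mem_image.mpr
      refine ⟨s, ?_, rfl⟩
      apply Multiset.mem_toFinset.mpr
      apply Multiset.mem_powersetCard.mpr
      constructor
      · apply Multiset.le_iff_count.mpr
        intro x
        by_cases hx : x ∈ s
        · have hxF : x ∈ F := by
            apply Multiset.mem_toFinset.mpr
            exact (Polynomial.mem_nthRoots hmpos).mpr (hsroot x hx)
          rw [Multiset.count_nsmul]
          have h1 : Multiset.count x F.val = 1 := Multiset.count_eq_one_of_mem F.nodup hxF
          rw [h1, mul_one]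
          calc Multiset.count x s ≤ Multiset.card s := Multiset.count_le_card x s
          _ = d := hscard
        · simp [Multiset.count_eq_zero_of_notMem hx]
      · exact hscard
    -- rational formulas at 0 and 1
    have h0 : v + (0:k) • (w - v) = v := by simp
    have h1 : v + (1:k) • (w - v) = w := by
      rw [one_smul]
      abel
    obtain ⟨p0, q0, hq0, H0⟩ := aux_rat hd π v w 0 (by rw [h0]; exact hv)
    obtain ⟨p1, q1, hq1, H1⟩ := aux_rat hd π v w 1 (by rw [h1]; exact hw)
    -- infinite set of good parameters
    set Sset : Set k := {t | q0.eval t ≠ 0 ∧ q1.eval t ≠ 0} with hSset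
    have hSinf : Sset.Infinite := by
      have hq0ne : q0 ≠ 0 := fun hh => hq0 (by rw [hh]; simp)
      have hq1ne : q1 ≠ 0 := fun hh => hq1 (by rw [hh]; simp)
      have hbad : ({t : k | Polynomial.IsRoot q0 t} ∪ {t : k | Polynomial.IsRoot q1 t}).Finite :=
        (Polynomial.finite_setOf_isRoot hq0ne).union (Polynomial.finite_setOf_isRoot hq1ne)
      apply Set.Infinite.mono (s := (Set.univ : Set k) \ _) ?_ (Set.infinite_univ.diff hbad)
      intro t ht
      constructor
      · exact fun hz => ht.2 (Or.inl hz)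
      · exact fun hz => ht.2 (Or.inr hz)
    -- the trace value function
    set μ : k → Ω := fun t =>
      if h : Submodule.span k (MulAction.orbit G (v + t • (w - v))) = ⊤ then
        ι (LinearMap.trace k V ((hπ _ h).choose).toLinearMap) else 0 with hμ
    have hμT : ∀ t ∈ Sset, μ t ∈ T := by
      intro t ht
      have hsp := (H0 t ht.1).1
      rw [hμ]
      simp only [dif_pos hsp]
      exact hmem _ hsp _ (hπ _ hsp).choose_spec
    -- pigeonhole
    have hex : ∃ y ∈ T, {t | t ∈ Sset ∧ μ t = y}.Infinite := by
      by_contra hcon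
      push_neg at hcon
      have hsub : Sset ⊆ ⋃ y ∈ (T : Set Ω), {t | t ∈ Sset ∧ μ t = y} := by
        intro t ht
        exact Set.mem_biUnion (hμT t ht) ⟨ht, rfl⟩
      have hfin : (⋃ y ∈ (T : Set Ω), {t | t ∈ Sset ∧ μ t = y}).Finite := by
        apply Set.Finite.biUnion T.finite_toSet
        intro y hy
        rcases hcon y hy with hfin'
        · exact hfin'
      exact hSinf (hfin.subset hsub)
    obtain ⟨y, hyT, hJ⟩ := hex
    -- vanishing polynomials
    have hvanish : ∀ (p q : Polynomial k),
        (∀ t ∈ Sset, q.eval t ≠ 0) →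
        (∀ t, t ∈ Sset ∧ μ t = y → ι (p.eval t) = y * ι (q.eval t)) →
        (p.map ι - Polynomial.C y * q.map ι) = 0 := by
      intro p q hqne hval
      apply Polynomial.eq_zero_of_infinite_isRoot
      apply Set.Infinite.mono (s := ι '' {t | t ∈ Sset ∧ μ t = y})
      · rintro x ⟨t, ht, rfl⟩
        have := hval t ht
        simp only [Polynomial.IsRoot, Polynomial.eval_sub, Polynomial.eval_mul,
          Polynomial.eval_C, Polynomial.eval_map, Polynomial.eval₂_at_apply, Set.mem_setOf_eq]
        rw [this]
        ring
      · exact hJ.image (Set.injOn_of_injective hιinj)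
    -- evaluate info on J
    have hval0 : ∀ t, t ∈ Sset ∧ μ t = y → ι (p0.eval t) = y * ι (q0.eval t) := by
      intro t ⟨ht, hμt⟩
      have hsp := (H0 t ht.1).1
      have htr := (H0 t ht.1).2 (hπ _ hsp).choose (hπ _ hsp).choose_spec
      rw [hμ] at hμt
      simp only [dif_pos hsp] at hμt
      rw [← htr, _root_.map_mul, hμt]
    have hval1 : ∀ t, t ∈ Sset ∧ μ t = y → ι (p1.eval t) = y * ι (q1.eval t) := by
      intro t ⟨ht, hμt⟩
      have hsp := (H0 t ht.1).1
      have htr := (H1 t ht.2).2 (hπ _ hsp).choose (hπ _ hsp).choose_spec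
      rw [hμ] at hμt
      simp only [dif_pos hsp] at hμt
      rw [← htr, _root_.map_mul, hμt]
    have hz0 := hvanish p0 q0 (fun t ht => ht.1) hval0
    have hz1 := hvanish p1 q1 (fun t ht => ht.2) hval1
    -- evaluate at 0 and 1
    have hev : ∀ (p q : Polynomial k), (p.map ι - Polynomial.C y * q.map ι) = 0 →
        ∀ t : k, ι (p.eval t) = y * ι (q.eval t) := by
      intro p q hz t
      have := congrArg (Polynomial.eval (ι t)) hz
      simpa [Polynomial.eval_sub, Polynomial.eval_mul, Polynomial.eval_C,
        Polynomial.eval_map, Polynomial.eval₂_at_apply, sub_eq_zero] using this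
    -- trace A at t = 0
    have htrA : LinearMap.trace k V A.toLinearMap * q0.eval 0 = p0.eval 0 := by
      have := (H0 0 hq0).2 A ?_
      · exact this
      · intro g; rw [h0]; exact hA g
    have htrB : LinearMap.trace k V B.toLinearMap * q1.eval 1 = p1.eval 1 := by
      have := (H1 1 hq1).2 B ?_
      · exact this
      · intro g; rw [h1]; exact hB g
    have hA' : ι (LinearMap.trace k V A.toLinearMap) = y := by
      have := hev p0 q0 hz0 0
      rw [← htrA, _root_.map_mul] at this
      exact mul_right_cancel₀ (fun hh => hq0 (hιinj (by rw [hh, map_zero]))) this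
    have hB' : ι (LinearMap.trace k V B.toLinearMap) = y := by
      have := hev p1 q1 hz1 1
      rw [← htrB, _root_.map_mul] at this
      exact mul_right_cancel₀ (fun hh => hq1 (hιinj (by rw [hh, map_zero]))) this
    exact hιinj (hA'.trans hB'.symm)
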